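/- ex(10; C3, C4) is attained by the Petersen graph: the maximum number of edges of a 10-vertex graph with girth at least 5 is 15. -/

import Mathlib

set_option maxHeartbeats 1000000

/-- `G` contains a 4-cycle as a subgraph. -/
def HasC4 {V : Type*} (G : SimpleGraph V) : Prop :=
  ∃ a b c d : V, a ≠ b ∧ a ≠ c ∧ a ≠ d ∧ b ≠ c ∧ b ≠ d ∧ c ≠ d ∧
    G.Adj a b ∧ G.Adj b c ∧ G.Adj c d ∧ G.Adj d a

/-- The Petersen graph as the Kneser graph `K(5, 2)`. -/
def petersen : SimpleGraph {s : Finset (Fin 5) // s.card = 2} where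
  Adj a b := Disjoint a.1 b.1
  symm := ⟨fun a b h => h.symm⟩
  loopless := ⟨fun a h => by
    have h2 := a.2
    simp only [disjoint_self] at h
    simp [h] at h2⟩

instance : DecidableRel petersen.Adj := fun a b =>
  inferInstanceAs (Decidable (Disjoint a.1 b.1))

open SimpleGraph Finset

section Aux

variable {V : Type} [Fintype V] [DecidableEq V] (G : SimpleGraph V) [DecidableRel G.Adj]

lemma tri_free (hT : G.CliqueFree 3) {a b c : V} (h1 : G.Adj a b) (h2 : G.Adj a c)
    (h3 : G.Adj b c) : False :=
  hT {a, b, c} (SimpleGraph.is3Clique_triple_iff.mpr ⟨h1, h2, h3⟩)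

lemma no_common (hC : ¬ HasC4 G) {v w u u' : V} (huu : u ≠ u') (hvw : v ≠ w)
    (h1 : G.Adj v u) (h2 : G.Adj v u') (h3 : G.Adj w u) (h4 : G.Adj w u') : False :=
  hC ⟨v, u, w, u', h1.ne, hvw, h2.ne, h3.ne', huu, h4.ne, h1, h3.symm, h4, h2.symm⟩

lemma moore (hT : G.CliqueFree 3) (hC : ¬ HasC4 G) (v : V)
    (h3 : ∀ u ∈ G.neighborFinset v, 3 ≤ G.degree u) :
    1 + 3 * G.degree v ≤ Fintype.card V := by
  classical
  set N := G.neighborFinset v with hN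
  set B := N.biUnion (fun u => G.neighborFinset u \ {v}) with hB
  have hdisj : ∀ u ∈ N, ∀ u' ∈ N, u ≠ u' →
      Disjoint (G.neighborFinset u \ {v}) (G.neighborFinset u' \ {v}) := by
    intro u hu u' hu' huu
    rw [hN, SimpleGraph.mem_neighborFinset] at hu hu'
    rw [Finset.disjoint_left]
    intro w hw hw'
    rw [Finset.mem_sdiff, SimpleGraph.mem_neighborFinset, Finset.mem_singleton] at hw hw'
    exact (no_common G hC huu (fun h => hw.2 h.symm) hu hu' hw.1.symm hw'.1.symm).elim
  have hBcard : 2 * N.card ≤ B.card := by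
    rw [hB, Finset.card_biUnion hdisj]
    calc 2 * N.card = ∑ _u ∈ N, 2 := by rw [Finset.sum_const, smul_eq_mul, mul_comm]
    _ ≤ ∑ u ∈ N, (G.neighborFinset u \ {v}).card := by
        apply Finset.sum_le_sum
        intro u hu
        have hu' := hu
        rw [hN, SimpleGraph.mem_neighborFinset] at hu'
        have hvu : v ∈ G.neighborFinset u := by
          rw [SimpleGraph.mem_neighborFinset]
          exact hu'.symm
        rw [Finset.card_sdiff_of_subset (Finset.singleton_subset_iff.mpr hvu), Finset.card_singleton]
        have := h3 u hu
        rw [← SimpleGraph.card_neighborFinset_eq_degree] at this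
        omega
  have hNB : Disjoint N B := by
    rw [Finset.disjoint_left]
    intro w hwN hwB
    rw [hB, Finset.mem_biUnion] at hwB
    obtain ⟨u, huN, hw⟩ := hwB
    rw [Finset.mem_sdiff, SimpleGraph.mem_neighborFinset] at hw
    rw [hN, SimpleGraph.mem_neighborFinset] at hwN huN
    exact tri_free G hT huN hwN hw.1
  have hvNB : v ∉ N ∪ B := by
    rw [Finset.mem_union]
    rintro (h | h)
    · exact G.notMem_neighborFinset_self v (hN ▸ h)
    · rw [hB, Finset.mem_biUnion] at h
      obtain ⟨u, _, hw⟩ := h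
      rw [Finset.mem_sdiff, Finset.mem_singleton] at hw
      exact hw.2 rfl
  have hcard : (insert v (N ∪ B)).card ≤ Fintype.card V := by
    simpa using Finset.card_le_univ (insert v (N ∪ B))
  rw [Finset.card_insert_of_notMem hvNB, Finset.card_union_of_disjoint hNB] at hcard
  have hdeg : N.card = G.degree v := G.card_neighborFinset_eq_degree v
  omega

end Aux

section Del

variable {V : Type} [Fintype V] [DecidableEq V] (G : SimpleGraph V) [DecidableRel G.Adj]

instance instDecInduce (s : Set V) [DecidablePred (· ∈ s)] :
    DecidableRel (G.induce s).Adj := fun a b =>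
  decidable_of_iff (G.Adj a.1 b.1) (by simp)

lemma del_bound (v w₀ : V) (hw : w₀ ≠ v) :
    G.edgeFinset.card ≤ (G.induce ({v}ᶜ : Set V)).edgeFinset.card + G.degree v := by
  classical
  have hsplit := Finset.filter_union_filter_not_eq (p := fun e => v ∈ e) G.edgeFinset
  have h1 : (G.edgeFinset.filter (fun e => v ∈ e)).card = G.degree v := by
    rw [← G.incidenceFinset_eq_filter, G.card_incidenceFinset_eq_degree]
  have h2 : (G.edgeFinset.filter (fun e => ¬ v ∈ e)).card ≤
      (G.induce ({v}ᶜ : Set V)).edgeFinset.card := by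
    set f : V → ({v}ᶜ : Set V) := fun x => if h : x = v then ⟨w₀, hw⟩ else ⟨x, h⟩ with hf
    have hfval : ∀ (e : Sym2 V), v ∉ e → Sym2.map (fun x => (f x : V)) e = e := by
      intro e
      induction e using Sym2.ind with
      | _ a b =>
        intro hv
        rw [Sym2.mem_iff] at hv
        push_neg at hv
        rw [Sym2.map_pair_eq]
        simp [hf, dif_neg (Ne.symm hv.1), dif_neg (Ne.symm hv.2)]
    apply Finset.card_le_card_of_injOn (fun e => e.map f)
    · intro e he
      revert he
      induction e using Sym2.ind with
      | _ a b =>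
        intro he
        rw [Finset.mem_coe, Finset.mem_filter, SimpleGraph.mem_edgeFinset, SimpleGraph.mem_edgeSet] at he
        obtain ⟨hadj, hv⟩ := he
        rw [Sym2.mem_iff] at hv
        push_neg at hv
        rw [Finset.mem_coe]
        beta_reduce
        rw [Sym2.map_pair_eq, SimpleGraph.mem_edgeFinset, SimpleGraph.mem_edgeSet]
        have ha : (f a : V) = a := by simp [hf, dif_neg (Ne.symm hv.1)]
        have hb : (f b : V) = b := by simp [hf, dif_neg (Ne.symm hv.2)]
        show G.Adj (f a : V) (f b : V)
        rw [ha, hb]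
        exact hadj
    · intro e₁ h₁ e₂ h₂ heq
      rw [Finset.coe_filter, Set.mem_setOf_eq] at h₁ h₂
      have := congrArg (Sym2.map (fun x : ({v}ᶜ : Set V) => (x : V))) heq
      rw [Sym2.map_map, Sym2.map_map] at this
      rwa [show ((fun x : ({v}ᶜ : Set V) => (x : V)) ∘ f) = (fun x => (f x : V)) from rfl,
        hfval e₁ h₁.2, hfval e₂ h₂.2] at this
  calc G.edgeFinset.card = ((G.edgeFinset.filter (fun e => v ∈ e)) ∪
      (G.edgeFinset.filter (fun e => ¬ v ∈ e))).card := by rw [hsplit]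
  _ ≤ (G.edgeFinset.filter (fun e => v ∈ e)).card +
      (G.edgeFinset.filter (fun e => ¬ v ∈ e)).card := Finset.card_union_le _ _
  _ ≤ (G.induce ({v}ᶜ : Set V)).edgeFinset.card + G.degree v := by omega

end Del

section Base

variable {V : Type} [Fintype V] [DecidableEq V] (G : SimpleGraph V) [DecidableRel G.Adj]

lemma base4 (hcard : Fintype.card V = 4) (hT : G.CliqueFree 3) (hC : ¬ HasC4 G) :
    G.edgeFinset.card ≤ 3 := by
  classical
  by_cases hbig : ∃ v, 3 ≤ G.degree v
  · obtain ⟨v, hv⟩ := hbig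
    have hNsub : G.neighborFinset v ⊆ Finset.univ.erase v := by
      intro x hx
      rw [SimpleGraph.mem_neighborFinset] at hx
      exact Finset.mem_erase.mpr ⟨hx.ne', Finset.mem_univ x⟩
    have herase : (Finset.univ.erase v).card = 3 := by
      rw [Finset.card_erase_of_mem (Finset.mem_univ v), Finset.card_univ, hcard]
    have hNeq : G.neighborFinset v = Finset.univ.erase v := by
      apply Finset.eq_of_subset_of_card_le hNsub
      rw [herase]
      rw [← SimpleGraph.card_neighborFinset_eq_degree] at hv
      exact hv
    have hsub : G.edgeFinset ⊆ G.incidenceFinset v := by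
      intro e
      induction e using Sym2.ind with
      | _ a b =>
        intro he
        rw [SimpleGraph.mem_edgeFinset, SimpleGraph.mem_edgeSet] at he
        by_cases hva : v = a
        · rw [SimpleGraph.mem_incidenceFinset, SimpleGraph.mk'_mem_incidenceSet_iff]
          exact ⟨he, Or.inl hva⟩
        · by_cases hvb : v = b
          · rw [SimpleGraph.mem_incidenceFinset, SimpleGraph.mk'_mem_incidenceSet_iff]
            exact ⟨he, Or.inr hvb⟩
          · exfalso
            have haN : a ∈ G.neighborFinset v := by
              rw [hNeq]
              exact Finset.mem_erase.mpr ⟨Ne.symm hva, Finset.mem_univ a⟩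
            have hbN : b ∈ G.neighborFinset v := by
              rw [hNeq]
              exact Finset.mem_erase.mpr ⟨Ne.symm hvb, Finset.mem_univ b⟩
            rw [SimpleGraph.mem_neighborFinset] at haN hbN
            exact tri_free G hT haN hbN he
    calc G.edgeFinset.card ≤ (G.incidenceFinset v).card := Finset.card_le_card hsub
    _ = G.degree v := G.card_incidenceFinset_eq_degree v
    _ ≤ 3 := by
      rw [← SimpleGraph.card_neighborFinset_eq_degree, hNeq, herase]
  · push_neg at hbig
    by_contra hm
    push_neg at hm
    have hsum := G.sum_degrees_eq_twice_card_edges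
    have hdeg2 : ∀ v, G.degree v = 2 := by
      by_contra hne
      push_neg at hne
      obtain ⟨w, hw⟩ := hne
      have hlt : ∑ v, G.degree v < ∑ _v : V, 2 := by
        apply Finset.sum_lt_sum
        · intro i _
          have := hbig i
          omega
        · refine ⟨w, Finset.mem_univ w, ?_⟩
          have := hbig w
          omega
      rw [Finset.sum_const, Finset.card_univ, hcard, smul_eq_mul] at hlt
      omega
    have hne : Nonempty V := Fintype.card_pos_iff.mp (by omega)
    obtain ⟨a⟩ := hne
    have ha2 : (G.neighborFinset a).card = 2 := by
      rw [SimpleGraph.card_neighborFinset_eq_degree]; exact hdeg2 a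
    obtain ⟨b, c, hbc, hNa⟩ := Finset.card_eq_two.mp ha2
    have hab : G.Adj a b := by
      rw [← SimpleGraph.mem_neighborFinset, hNa]; exact Finset.mem_insert_self b {c}
    have hac : G.Adj a c := by
      rw [← SimpleGraph.mem_neighborFinset, hNa]
      exact Finset.mem_insert_of_mem (Finset.mem_singleton_self c)
    have hnbc : ¬ G.Adj b c := fun h => tri_free G hT hab hac h
    have hb2 : 1 < (G.neighborFinset b).card := by
      rw [SimpleGraph.card_neighborFinset_eq_degree, hdeg2 b]; omega
    obtain ⟨x, hxb, hxa⟩ := Finset.exists_mem_ne hb2 a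
    have hbx : G.Adj b x := (G.mem_neighborFinset b x).mp hxb
    have hc2 : 1 < (G.neighborFinset c).card := by
      rw [SimpleGraph.card_neighborFinset_eq_degree, hdeg2 c]; omega
    obtain ⟨y, hyc, hya⟩ := Finset.exists_mem_ne hc2 a
    have hcy : G.Adj c y := (G.mem_neighborFinset c y).mp hyc
    have hxc : x ≠ c := fun h => hnbc (h ▸ hbx)
    have hyb : y ≠ b := fun h => hnbc (h ▸ hcy).symm
    have habc : ({a, b, c} : Finset V).card = 3 := by
      rw [Finset.card_insert_of_notMem, Finset.card_insert_of_notMem, Finset.card_singleton]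
      · simpa using hbc
      · simp only [Finset.mem_insert, Finset.mem_singleton]
        push_neg
        exact ⟨hab.ne, hac.ne⟩
    have hcompl : (Finset.univ \ ({a, b, c} : Finset V)).card ≤ 1 := by
      rw [Finset.card_sdiff_of_subset (Finset.subset_univ _), Finset.card_univ, hcard, habc]
    have hxy : x = y := by
      have hxmem : x ∈ Finset.univ \ ({a, b, c} : Finset V) := by
        simp only [Finset.mem_sdiff, Finset.mem_univ, true_and, Finset.mem_insert,
          Finset.mem_singleton]
        push_neg
        exact ⟨hxa, hbx.ne', hxc⟩
      have hymem : y ∈ Finset.univ \ ({a, b, c} : Finset V) := by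
        simp only [Finset.mem_sdiff, Finset.mem_univ, true_and, Finset.mem_insert,
          Finset.mem_singleton]
        push_neg
        exact ⟨hya, hyb, hcy.ne'⟩
      exact Finset.card_le_one.mp hcompl x hxmem y hymem
    exact hC ⟨a, b, x, c, hab.ne, Ne.symm hxa, hac.ne, Ne.symm (hbx.ne'), hbc, hxc,
      hab, hbx, hxy ▸ hcy.symm, hac.symm⟩

end Base

lemma main_bound : ∀ n : ℕ, 4 ≤ n → n ≤ 10 →
    ∀ (V : Type) [Fintype V] [DecidableEq V] (G : SimpleGraph V) [DecidableRel G.Adj],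
      Fintype.card V = n → G.CliqueFree 3 → ¬ HasC4 G → G.edgeFinset.card ≤ 2 * n - 5 := by
  intro n
  induction n using Nat.strong_induction_on with
  | _ n ih =>
    intro h4 h10 V _ _ G _ hcard hT hC
    by_cases hn4 : n = 4
    · subst hn4
      exact base4 G hcard hT hC
    · have h5 : 5 ≤ n := by omega
      by_cases hmin : ∀ v, 3 ≤ G.degree v
      · by_contra hm
        push_neg at hm
        by_cases hn10 : n = 10
        · have h4d : ∃ v, 4 ≤ G.degree v := by
            by_contra hall
            push_neg at hall
            have hsum := G.sum_degrees_eq_twice_card_edges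
            have hle : ∑ v, G.degree v ≤ 3 * Fintype.card V := by
              calc ∑ v, G.degree v ≤ ∑ _v : V, 3 :=
                Finset.sum_le_sum (fun i _ => by have := hall i; omega)
              _ = 3 * Fintype.card V := by
                rw [Finset.sum_const, Finset.card_univ, smul_eq_mul, mul_comm]
            rw [hcard] at hle
            omega
          obtain ⟨v, hv⟩ := h4d
          have hmo := moore G hT hC v (fun u _ => hmin u)
          rw [hcard] at hmo
          omega
        · have hne : Nonempty V := Fintype.card_pos_iff.mp (by omega)
          obtain ⟨v⟩ := hne
          have hmo := moore G hT hC v (fun u _ => hmin u)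
          have hv := hmin v
          rw [hcard] at hmo
          omega
      · push_neg at hmin
        obtain ⟨v, hv⟩ := hmin
        obtain ⟨w₀, hw₀⟩ := Fintype.exists_ne_of_one_lt_card (by omega) v
        have hdel := del_bound G v w₀ hw₀
        have hcard' : Fintype.card ({v}ᶜ : Set V) = n - 1 := by
          rw [Fintype.card_compl_set]
          simp [hcard]
        have hT' : (G.induce ({v}ᶜ : Set V)).CliqueFree 3 :=
          hT.comap (SimpleGraph.Embedding.induce ({v}ᶜ : Set V)).isContained
        have hC' : ¬ HasC4 (G.induce ({v}ᶜ : Set V)) := by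
          rintro ⟨a, b, c, d, h1, h2, h3, h4', h5', h6, h7, h8, h9, h10'⟩
          exact hC ⟨a, b, c, d, Subtype.coe_ne_coe.mpr h1, Subtype.coe_ne_coe.mpr h2,
            Subtype.coe_ne_coe.mpr h3, Subtype.coe_ne_coe.mpr h4', Subtype.coe_ne_coe.mpr h5',
            Subtype.coe_ne_coe.mpr h6, h7, h8, h9, h10'⟩
        have hrec := ih (n - 1) (by omega) (by omega) (by omega)
          ({v}ᶜ : Set V) (G.induce ({v}ᶜ : Set V)) hcard' hT' hC'
        omega

lemma petersen_card : Fintype.card {s : Finset (Fin 5) // s.card = 2} = 10 := by decide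

lemma petersen_cliqueFree : petersen.CliqueFree 3 := by
  have h3 : ∀ a b c : {s : Finset (Fin 5) // s.card = 2},
      ¬(petersen.Adj a b ∧ petersen.Adj a c ∧ petersen.Adj b c) := by decide
  intro t ht
  rw [SimpleGraph.is3Clique_iff] at ht
  obtain ⟨a, b, c, h1, h2, h3', -⟩ := ht
  exact h3 a b c ⟨h1, h2, h3'⟩

instance {V : Type*} [Fintype V] [DecidableEq V] (G : SimpleGraph V) [DecidableRel G.Adj] :
    Decidable (HasC4 G) := by unfold HasC4; infer_instance

lemma petersen_noC4 : ¬ HasC4 petersen := by decide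

lemma petersen_edges : petersen.edgeFinset.card = 15 := by decide

theorem stmt16 :
    (∀ G : SimpleGraph (Fin 10), G.CliqueFree 3 → ¬ HasC4 G → G.edgeSet.ncard ≤ 15) ∧
    ∃ G : SimpleGraph (Fin 10), G.CliqueFree 3 ∧ ¬ HasC4 G ∧ G.edgeSet.ncard = 15 ∧
      Nonempty (G ≃g petersen) := by
  constructor
  · intro G hT hC
    letI : DecidableRel G.Adj := Classical.decRel _
    have h := main_bound 10 (by norm_num) le_rfl (Fin 10) G (by simp) hT hC
    rw [← SimpleGraph.coe_edgeFinset, Set.ncard_coe_finset]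
    exact h
  · set e : Fin 10 ≃ {s : Finset (Fin 5) // s.card = 2} :=
      (Fintype.equivFinOfCardEq petersen_card).symm with he
    refine ⟨petersen.comap e.toEmbedding, ?_, ?_, ?_, ⟨SimpleGraph.Iso.comap e petersen⟩⟩
    · exact petersen_cliqueFree.comap (SimpleGraph.Iso.comap e petersen).toEmbedding.isContained
    · rintro ⟨a, b, c, d, h1, h2, h3, h4, h5, h6, h7, h8, h9, h10⟩
      exact petersen_noC4 ⟨e a, e b, e c, e d,
        fun h => h1 (e.injective h), fun h => h2 (e.injective h), fun h => h3 (e.injective h),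
        fun h => h4 (e.injective h), fun h => h5 (e.injective h), fun h => h6 (e.injective h),
        h7, h8, h9, h10⟩
    · letI : DecidableRel (petersen.comap e.toEmbedding).Adj := fun a b =>
        inferInstanceAs (Decidable (petersen.Adj (e a) (e b)))
      rw [← SimpleGraph.coe_edgeFinset, Set.ncard_coe_finset]
      erw [(SimpleGraph.Iso.comap e petersen).card_edgeFinset_eq]
      exact petersen_edges
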